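/- Let h be a Hermitian operator on ℂ²⊗ℂ² of rank 2 whose image (the span of its nonzero eigenvectors) contains no entangled vector, and suppose h ≥ 0 with nontrivial kernel. Then h = |φ⟩⟨φ| ⊗ η or h = η ⊗ |φ⟩⟨φ| for some unit vector |φ⟩ ∈ ℂ² and some positive definite operator η on ℂ²; in particular ker(h) = ker(|φ⟩⟨φ| ⊗ 1) (respectively ker(1 ⊗ |φ⟩⟨φ|)). -/

import Mathlib

open Matrix
open scoped ComplexOrder

private lemma cross_mul_cross (x y a b u w : Fin 2 → ℂ)
    (hs : ∀ i j, x i * y j + a i * b j = u i * w j) :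
    (x 0 * a 1 - x 1 * a 0) * (y 0 * b 1 - y 1 * b 0) = 0 := by
  have h00 := hs 0 0; have h01 := hs 0 1; have h10 := hs 1 0; have h11 := hs 1 1
  linear_combination (x 1 * y 1 + a 1 * b 1) * h00 + (u 0 * w 0) * h11
    - (x 1 * y 0 + a 1 * b 0) * h01 - (u 0 * w 1) * h10

private lemma parallel_of_cross {x u : Fin 2 → ℂ} (hx : x ≠ 0)
    (hc : x 0 * u 1 - x 1 * u 0 = 0) : ∃ t : ℂ, ∀ i, u i = t * x i := by
  have hx' : x 0 ≠ 0 ∨ x 1 ≠ 0 := by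
    by_contra hcon; push_neg at hcon
    exact hx (funext fun i => by fin_cases i <;> simp [hcon.1, hcon.2])
  rcases hx' with h0 | h1
  · refine ⟨u 0 / x 0, fun i => ?_⟩
    fin_cases i <;> simp only [Fin.zero_eta, Fin.mk_one]
    · field_simp
    · field_simp
      linear_combination hc
  · refine ⟨u 1 / x 1, fun i => ?_⟩
    fin_cases i <;> simp only [Fin.zero_eta, Fin.mk_one]
    · field_simp
      linear_combination -hc
    · field_simp

private lemma dichotomy (h : Matrix (Fin 2 × Fin 2) (Fin 2 × Fin 2) ℂ) (hne : h ≠ 0)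
    (hnoent : ∀ v : Fin 2 × Fin 2 → ℂ, (∃ w, h.mulVec w = v) →
      ∃ x y : Fin 2 → ℂ, ∀ i j : Fin 2, v (i, j) = x i * y j) :
    (∃ x : Fin 2 → ℂ, x ≠ 0 ∧ ∀ q, ∃ y : Fin 2 → ℂ, ∀ i j, h (i,j) q = x i * y j) ∨
    (∃ y : Fin 2 → ℂ, y ≠ 0 ∧ ∀ q, ∃ x : Fin 2 → ℂ, ∀ i j, h (i,j) q = x i * y j) := by
  have colfact : ∀ q, ∃ x y : Fin 2 → ℂ, ∀ i j, h (i,j) q = x i * y j := by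
    intro q
    obtain ⟨x, y, hxy⟩ := hnoent (h.mulVec (Pi.single q 1)) ⟨_, rfl⟩
    exact ⟨x, y, fun i j => by simpa [Matrix.mulVec_single] using (hxy i j).symm |>.symm⟩
  have sumfact : ∀ q q', ∃ u w : Fin 2 → ℂ, ∀ i j, h (i,j) q + h (i,j) q' = u i * w j := by
    intro q q'
    obtain ⟨u, w, huw⟩ := hnoent (h.mulVec (Pi.single q 1 + Pi.single q' 1)) ⟨_, rfl⟩
    refine ⟨u, w, fun i j => ?_⟩
    have := huw i j
    simpa [Matrix.mulVec_add, Matrix.mulVec_single] using this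
  obtain ⟨p₀, q₀, hpq⟩ : ∃ p q, h p q ≠ 0 := by
    by_contra hc; push_neg at hc
    exact hne (by ext p q; exact hc p q)
  obtain ⟨x, y, hxy⟩ := colfact q₀
  have hprod : h p₀ q₀ = x p₀.1 * y p₀.2 := hxy p₀.1 p₀.2
  have hx : x p₀.1 ≠ 0 := fun hc => hpq (by rw [hprod, hc, zero_mul])
  have hy : y p₀.2 ≠ 0 := fun hc => hpq (by rw [hprod, hc, mul_zero])
  have hxne : x ≠ 0 := fun hc => hx (congrFun hc p₀.1)
  have hyne : y ≠ 0 := fun hc => hy (congrFun hc p₀.2)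
  by_cases hA : ∀ q, ∃ y' : Fin 2 → ℂ, ∀ i j, h (i,j) q = x i * y' j
  · exact Or.inl ⟨x, hxne, hA⟩
  by_cases hB : ∀ q, ∃ x' : Fin 2 → ℂ, ∀ i j, h (i,j) q = x' i * y j
  · exact Or.inr ⟨y, hyne, hB⟩
  exfalso
  push_neg at hA hB
  obtain ⟨q₂, hq₂⟩ := hA
  obtain ⟨q₃, hq₃⟩ := hB
  obtain ⟨u, w, huw⟩ := colfact q₂
  have hcxu : x 0 * u 1 - x 1 * u 0 ≠ 0 := by
    intro hc
    obtain ⟨t, ht⟩ := parallel_of_cross hxne hc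
    obtain ⟨i, j, hij⟩ := hq₂ (fun j => t * w j)
    exact hij (by rw [huw i j, ht i]; ring)
  have hune : u ≠ 0 := by
    intro hc
    apply hcxu; rw [hc]; simp
  have hwne : w ≠ 0 := by
    intro hc
    obtain ⟨i, j, hij⟩ := hq₂ 0
    exact hij (by rw [huw i j, hc]; simp)
  obtain ⟨s, t2, hst⟩ := sumfact q₀ q₂
  have hsum1 : ∀ i j, x i * y j + u i * w j = s i * t2 j := by
    intro i j; rw [← hxy i j, ← huw i j]; exact hst i j
  have hcyw : y 0 * w 1 - y 1 * w 0 = 0 := by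
    rcases mul_eq_zero.mp (cross_mul_cross x y u w s t2 hsum1) with hc | hc
    · exact absurd hc hcxu
    · exact hc
  obtain ⟨c, hcw⟩ := parallel_of_cross hyne hcyw
  have hcne : c ≠ 0 := by
    intro hc; apply hwne; funext j; simp [hcw j, hc]
  obtain ⟨u', w', huw'⟩ := colfact q₃
  have hcyw' : y 0 * w' 1 - y 1 * w' 0 ≠ 0 := by
    intro hc
    obtain ⟨t', ht'⟩ := parallel_of_cross hyne hc
    obtain ⟨i, j, hij⟩ := hq₃ (fun i => t' * u' i)
    exact hij (by rw [huw' i j, ht' j]; ring)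
  have hw'ne : w' ≠ 0 := fun hc => hcyw' (by rw [hc]; simp)
  have hu'ne : u' ≠ 0 := by
    intro hc
    obtain ⟨i, j, hij⟩ := hq₃ 0
    exact hij (by rw [huw' i j, hc]; simp)
  obtain ⟨s', t2', hst'⟩ := sumfact q₀ q₃
  have hsum2 : ∀ i j, x i * y j + u' i * w' j = s' i * t2' j := fun i j => by
    rw [← hxy i j, ← huw' i j]; exact hst' i j
  have hcxu' : x 0 * u' 1 - x 1 * u' 0 = 0 := by
    rcases mul_eq_zero.mp (cross_mul_cross x y u' w' s' t2' hsum2) with hc | hc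
    · exact hc
    · exact absurd hc hcyw'
  obtain ⟨t, htx⟩ := parallel_of_cross hxne hcxu'
  have htne : t ≠ 0 := by
    intro hc; apply hu'ne; funext i; simp [htx i, hc]
  obtain ⟨s'', t2'', hst''⟩ := sumfact q₂ q₃
  have hsum3 : ∀ i j, u i * w j + u' i * w' j = s'' i * t2'' j := fun i j => by
    rw [← huw i j, ← huw' i j]; exact hst'' i j
  rcases mul_eq_zero.mp (cross_mul_cross u w u' w' s'' t2'' hsum3) with hc | hc
  · apply hcxu
    have h1 : u 0 * (t * x 1) - u 1 * (t * x 0) = 0 := by rw [← htx 1, ← htx 0]; exact hc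
    have h2 : t * (u 0 * x 1 - u 1 * x 0) = 0 := by linear_combination h1
    rcases mul_eq_zero.mp h2 with h3 | h3
    · exact absurd h3 htne
    · linear_combination -h3
  · apply hcyw'
    have h1 : (c * y 0) * w' 1 - (c * y 1) * w' 0 = 0 := by rw [← hcw 0, ← hcw 1]; exact hc
    have h2 : c * (y 0 * w' 1 - y 1 * w' 0) = 0 := by linear_combination h1
    rcases mul_eq_zero.mp h2 with h3 | h3
    · exact absurd h3 hcne
    · exact h3

private lemma main_lemma (h : Matrix (Fin 2 × Fin 2) (Fin 2 × Fin 2) ℂ)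
    (hherm : h.IsHermitian) (hpsd : h.PosSemidef) (hrank : h.rank = 2)
    (x : Fin 2 → ℂ) (i₀ : Fin 2) (hx : x i₀ ≠ 0)
    (hcols : ∀ q : Fin 2 × Fin 2, ∃ y : Fin 2 → ℂ, ∀ i j : Fin 2, h (i,j) q = x i * y j) :
    ∃ (φ : Fin 2 → ℂ) (η : Matrix (Fin 2) (Fin 2) ℂ),
      (∑ i : Fin 2, Complex.normSq (φ i)) = 1 ∧ η.PosDef ∧
      (∀ i j k l : Fin 2, h (i,j) (k,l) = (φ i * star (φ k)) * η j l) ∧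
      (∀ v : Fin 2 × Fin 2 → ℂ, h.mulVec v = 0 ↔
        (Matrix.of fun p q : Fin 2 × Fin 2 =>
          (φ p.1 * star (φ q.1)) * (if p.2 = q.2 then (1:ℂ) else 0)).mulVec v = 0) := by
  choose Y hY using hcols
  have C : ∀ (i i' j : Fin 2) (q : Fin 2 × Fin 2), h (i,j) q * x i' = h (i',j) q * x i := by
    intro i i' j q; rw [hY q i j, hY q i' j]; ring
  have herm : ∀ p q, h p q = star (h q p) := fun p q => (hherm.apply p q).symm
  have R : ∀ (p : Fin 2 × Fin 2) (k k' l : Fin 2),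
      h p (k,l) * star (x k') = h p (k',l) * star (x k) := by
    intro p k k' l
    have e := congrArg star (C k k' l p)
    simp only [star_mul'] at e
    rw [herm p (k,l), herm p (k',l)]
    linear_combination e
  have key : ∀ i j k l : Fin 2,
      h (i,j) (k,l) * (x i₀ * star (x i₀)) = h (i₀,j) (i₀,l) * (x i * star (x k)) := by
    intro i j k l
    have e1 := C i i₀ j (k,l)
    have e2 := R (i₀,j) k i₀ l
    linear_combination star (x i₀) * e1 + x i * e2
  set N : ℝ := ∑ i : Fin 2, Complex.normSq (x i) with hN
  have hNpos : 0 < N := by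
    have hle : Complex.normSq (x i₀) ≤ N := by
      rw [hN]
      exact Finset.single_le_sum (fun i _ => Complex.normSq_nonneg (x i)) (Finset.mem_univ i₀)
    have := Complex.normSq_pos.mpr hx
    linarith
  set r : ℝ := Real.sqrt N with hr
  have hrpos : 0 < r := Real.sqrt_pos.mpr hNpos
  have hrr : r * r = N := Real.mul_self_sqrt hNpos.le
  have hrne : (r : ℂ) ≠ 0 := by exact_mod_cast hrpos.ne'
  set φ : Fin 2 → ℂ := fun i => x i / (r : ℂ) with hφ
  have hφstar : ∀ i, star (φ i) = star (x i) / (r : ℂ) := by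
    intro i; simp [hφ, Complex.star_def, map_div₀, Complex.conj_ofReal]
  have hφi₀ : φ i₀ ≠ 0 := div_ne_zero hx hrne
  have hNsum : Complex.normSq (x 0) + Complex.normSq (x 1) = N := by
    rw [hN, Fin.sum_univ_two]
  have hunit : (∑ i : Fin 2, Complex.normSq (φ i)) = 1 := by
    rw [Fin.sum_univ_two]
    simp only [hφ, Complex.normSq_div, Complex.normSq_ofReal]
    rw [← add_div, hrr, hNsum, div_self hNpos.ne']
  set d : ℂ := x i₀ * star (x i₀) with hd
  have hdne : d ≠ 0 := mul_ne_zero hx (star_ne_zero.mpr hx)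
  set η : Matrix (Fin 2) (Fin 2) ℂ :=
    Matrix.of (fun j l => ((r : ℂ) * (r : ℂ) * h (i₀,j) (i₀,l)) / d) with hη
  have fact : ∀ i j k l : Fin 2, h (i,j) (k,l) = (φ i * star (φ k)) * η j l := by
    intro i j k l
    apply mul_left_cancel₀ (mul_ne_zero (mul_ne_zero hrne hrne) hdne)
    calc (r:ℂ) * (r:ℂ) * d * h (i,j) (k,l)
        = ((r:ℂ) * (r:ℂ)) * (h (i,j) (k,l) * d) := by ring
      _ = ((r:ℂ) * (r:ℂ)) * (h (i₀,j) (i₀,l) * (x i * star (x k))) := by rw [key i j k l]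
      _ = (r:ℂ) * (r:ℂ) * d * ((φ i * star (φ k)) * η j l) := by
          rw [hφstar k]
          simp only [hφ, hη, Matrix.of_apply]
          field_simp
  have hS : star (φ 0) * φ 0 + star (φ 1) * φ 1 = 1 := by
    have hsum2 := hunit
    rw [Fin.sum_univ_two] at hsum2
    simp only [Complex.star_def]
    rw [mul_comm ((starRingEnd ℂ) (φ 0)) (φ 0), mul_comm ((starRingEnd ℂ) (φ 1)) (φ 1),
      Complex.mul_conj, Complex.mul_conj, ← Complex.ofReal_add, hsum2, Complex.ofReal_one]
  have hstar_d : star d = d := by rw [hd]; simp [star_mul', mul_comm]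
  have hηherm : η.IsHermitian := by
    ext j l
    simp only [hη, Matrix.conjTranspose_apply, Matrix.of_apply]
    rw [star_div₀, star_mul', star_mul', hstar_d, hherm.apply]
    simp [Complex.star_def, Complex.conj_ofReal]
  have hηpsd : η.PosSemidef := by
    refine .of_dotProduct_mulVec_nonneg hηherm (fun z => ?_)
    have hp := hpsd.dotProduct_mulVec_nonneg (fun p => φ p.1 * z p.2)
    have heq : star (fun p : Fin 2 × Fin 2 => φ p.1 * z p.2) ⬝ᵥ
        h *ᵥ (fun p : Fin 2 × Fin 2 => φ p.1 * z p.2) = star z ⬝ᵥ η *ᵥ z := by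
      simp only [Matrix.mulVec, dotProduct, Fintype.sum_prod_type, Fin.sum_univ_two,
        Pi.star_apply, star_mul']
      simp only [fact]
      linear_combination ((star (φ 0) * φ 0 + star (φ 1) * φ 1 + 1) *
        (star (z 0) * (η 0 0 * z 0 + η 0 1 * z 1) + star (z 1) * (η 1 0 * z 0 + η 1 1 * z 1))) * hS
    rw [← heq]; exact hp
  have hφ01 : φ 0 ≠ 0 ∨ φ 1 ≠ 0 := by
    rcases (by decide : ∀ m : Fin 2, m = 0 ∨ m = 1) i₀ with h2 | h2
    · exact Or.inl (h2 ▸ hφi₀)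
    · exact Or.inr (h2 ▸ hφi₀)
  have hdet : η.det ≠ 0 := by
    intro hdet0
    obtain ⟨z, hzne, hz⟩ := Matrix.exists_mulVec_eq_zero_iff.mpr hdet0
    obtain ⟨l₀, hl₀⟩ : ∃ l, z l ≠ 0 := by
      by_contra hcon; push_neg at hcon; exact hzne (funext hcon)
    have hzj : ∀ j : Fin 2, η j 0 * z 0 + η j 1 * z 1 = 0 := by
      intro j
      have := congrFun hz j
      simpa [Matrix.mulVec, dotProduct, Fin.sum_univ_two] using this
    set ψ : Fin 2 → ℂ := ![-(star (φ 1)), star (φ 0)] with hψ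
    have hψorth : star (φ 0) * ψ 0 + star (φ 1) * ψ 1 = 0 := by
      simp [hψ]; ring
    obtain ⟨k₀, hk₀⟩ : ∃ k, ψ k ≠ 0 := by
      rcases hφ01 with hp | hp
      · exact ⟨1, by simpa [hψ] using star_ne_zero.mpr hp⟩
      · exact ⟨0, by simpa [hψ] using star_ne_zero.mpr hp⟩
    have hker1 : ∀ (a : Fin 2 → ℂ), h.mulVec (fun p => ψ p.1 * a p.2) = 0 := by
      intro a
      funext p; obtain ⟨i, j⟩ := p
      simp only [Matrix.mulVec, dotProduct, Fintype.sum_prod_type, Fin.sum_univ_two,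
        fact, Pi.zero_apply]
      linear_combination (φ i * (η j 0 * a 0 + η j 1 * a 1)) * hψorth
    have hker2 : h.mulVec (fun p => φ p.1 * z p.2) = 0 := by
      funext p; obtain ⟨i, j⟩ := p
      simp only [Matrix.mulVec, dotProduct, Fintype.sum_prod_type, Fin.sum_univ_two,
        fact, Pi.zero_apply]
      linear_combination (φ i * (star (φ 0) * φ 0 + star (φ 1) * φ 1)) * (hzj j)
    set v1 : Fin 2 × Fin 2 → ℂ := fun p => ψ p.1 * (if p.2 = 0 then 1 else 0) with hv1
    set v2 : Fin 2 × Fin 2 → ℂ := fun p => ψ p.1 * (if p.2 = 1 then 1 else 0) with hv2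
    set v3 : Fin 2 × Fin 2 → ℂ := fun p => φ p.1 * z p.2 with hv3
    have hLI : LinearIndependent ℂ ![v1, v2, v3] := by
      rw [Fintype.linearIndependent_iff]
      intro g hg
      have e : ∀ (k l : Fin 2), g 0 * (ψ k * (if l = 0 then 1 else 0))
          + g 1 * (ψ k * (if l = 1 then 1 else 0)) + g 2 * (φ k * z l) = 0 := by
        intro k l
        have := congrFun hg (k, l)
        simpa [Fin.sum_univ_three, hv1, hv2, hv3] using this
      have hg2 : g 2 = 0 := by
        have e0 := e 0 l₀
        have e1 := e 1 l₀
        have hz2 : g 2 * z l₀ = 0 := by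
          linear_combination star (φ 0) * e0 + star (φ 1) * e1
            - (g 0 * (if l₀ = 0 then (1:ℂ) else 0) + g 1 * (if l₀ = 1 then (1:ℂ) else 0)) * hψorth
            - (g 2 * z l₀) * hS
        rcases mul_eq_zero.mp hz2 with hcc | hcc
        · exact hcc
        · exact absurd hcc hl₀
      have hg0 : g 0 = 0 := by
        have := e k₀ 0
        rw [hg2] at this
        simp at this
        rcases this with hcc | hcc
        · exact hcc
        · exact absurd hcc hk₀
      have hg1 : g 1 = 0 := by
        have := e k₀ 1
        rw [hg2] at this
        simp at this
        rcases this with hcc | hcc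
        · exact hcc
        · exact absurd hcc hk₀
      intro i; fin_cases i
      · exact hg0
      · exact hg1
      · exact hg2
    have hmem : ∀ m : Fin 3, (![v1, v2, v3] m) ∈ LinearMap.ker h.mulVecLin := by
      intro m; fin_cases m
      · simpa [LinearMap.mem_ker, Matrix.mulVecLin_apply, hv1] using hker1 (fun l => if l = 0 then 1 else 0)
      · simpa [LinearMap.mem_ker, Matrix.mulVecLin_apply, hv2] using hker1 (fun l => if l = 1 then 1 else 0)
      · simpa [LinearMap.mem_ker, Matrix.mulVecLin_apply, hv3] using hker2
    have hLIker : LinearIndependent ℂ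
        (fun m : Fin 3 => (⟨![v1, v2, v3] m, hmem m⟩ : LinearMap.ker h.mulVecLin)) :=
      LinearIndependent.of_comp (LinearMap.ker h.mulVecLin).subtype (by exact hLI)
    have hcard := hLIker.fintype_card_le_finrank
    have hrn := LinearMap.finrank_range_add_finrank_ker h.mulVecLin
    have hr2 : Module.finrank ℂ (LinearMap.range h.mulVecLin) = 2 := hrank
    rw [hr2] at hrn
    have hfr : Module.finrank ℂ (Fin 2 × Fin 2 → ℂ) = 4 := by
      simp [Module.finrank_pi]
    rw [hfr] at hrn
    simp only [Fintype.card_fin] at hcard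
    omega
  have hηpd : η.PosDef := by
    refine .of_dotProduct_mulVec_pos hηherm (fun z hz => ?_)
    have hle := hηpsd.dotProduct_mulVec_nonneg z
    rcases hle.lt_or_eq with hlt | heq
    · exact hlt
    · exfalso
      have h0 : η *ᵥ z = 0 := (hηpsd.dotProduct_mulVec_zero_iff z).mp heq.symm
      exact hdet (Matrix.exists_mulVec_eq_zero_iff.mp ⟨z, hz, h0⟩)
  have hkeriff : ∀ v : Fin 2 × Fin 2 → ℂ, h.mulVec v = 0 ↔
      (Matrix.of fun p q : Fin 2 × Fin 2 =>
        (φ p.1 * star (φ q.1)) * (if p.2 = q.2 then (1:ℂ) else 0)).mulVec v = 0 := by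
    intro v
    set u : Fin 2 → ℂ := fun l => star (φ 0) * v (0,l) + star (φ 1) * v (1,l) with hu
    have hH : ∀ i j : Fin 2, (h.mulVec v) (i,j) = φ i * (η j 0 * u 0 + η j 1 * u 1) := by
      intro i j
      simp only [Matrix.mulVec, dotProduct, Fintype.sum_prod_type, Fin.sum_univ_two,
        fact, hu]
      ring
    have hM : ∀ i j : Fin 2, ((Matrix.of fun p q : Fin 2 × Fin 2 =>
        (φ p.1 * star (φ q.1)) * (if p.2 = q.2 then (1:ℂ) else 0)).mulVec v) (i,j)
        = φ i * u j := by
      intro i j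
      simp only [Matrix.mulVec, dotProduct, Fintype.sum_prod_type, Fin.sum_univ_two,
        Matrix.of_apply, hu]
      fin_cases j <;> simp <;> ring
    constructor
    · intro h0
      have hu0 : u = 0 := by
        have hηu : η *ᵥ u = 0 := by
          funext j
          have h1 := hH i₀ j
          rw [h0] at h1
          simp only [Pi.zero_apply] at h1
          have h2 : η j 0 * u 0 + η j 1 * u 1 = 0 := by
            rcases mul_eq_zero.mp h1.symm with hc | hc
            · exact absurd hc hφi₀
            · exact hc
          simpa [Matrix.mulVec, dotProduct, Fin.sum_univ_two] using h2
        by_contra hune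
        exact hdet (Matrix.exists_mulVec_eq_zero_iff.mp ⟨u, hune, hηu⟩)
      funext p; obtain ⟨i, j⟩ := p
      rw [hM i j, hu0]
      simp
    · intro h0
      have hu0 : ∀ j, u j = 0 := by
        intro j
        have h1 := hM i₀ j
        rw [h0] at h1
        simp only [Pi.zero_apply] at h1
        rcases mul_eq_zero.mp h1.symm with hc | hc
        · exact absurd hc hφi₀
        · exact hc
      funext p; obtain ⟨i, j⟩ := p
      rw [hH i j, hu0 0, hu0 1]
      simp
  exact ⟨φ, η, hunit, hηpd, fact, hkeriff⟩


/-- Let `h` be a Hermitian positive semidefinite operator on `ℂ²⊗ℂ²` of rank 2 with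
nontrivial kernel whose image contains no entangled vector.  Then
`h = |φ⟩⟨φ| ⊗ η` or `h = η ⊗ |φ⟩⟨φ|` for a unit vector `φ ∈ ℂ²` and positive definite
`η` on `ℂ²`; in particular `ker h = ker (|φ⟩⟨φ| ⊗ 1)` (resp. `ker (1 ⊗ |φ⟩⟨φ|)`). -/
theorem stmt17 (h : Matrix (Fin 2 × Fin 2) (Fin 2 × Fin 2) ℂ)
    (hherm : h.IsHermitian) (hpsd : h.PosSemidef) (hrank : h.rank = 2)
    (hker : ∃ v : Fin 2 × Fin 2 → ℂ, v ≠ 0 ∧ h.mulVec v = 0)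
    (hnoent : ∀ v : Fin 2 × Fin 2 → ℂ, (∃ w, h.mulVec w = v) →
      ∃ x y : Fin 2 → ℂ, ∀ i j : Fin 2, v (i, j) = x i * y j) :
    ∃ (φ : Fin 2 → ℂ) (η : Matrix (Fin 2) (Fin 2) ℂ),
      (∑ i : Fin 2, Complex.normSq (φ i)) = 1 ∧ η.PosDef ∧
      (((∀ i j k l : Fin 2, h (i, j) (k, l) = (φ i * star (φ k)) * η j l) ∧
        (∀ v : Fin 2 × Fin 2 → ℂ, h.mulVec v = 0 ↔
          (Matrix.of fun p q : Fin 2 × Fin 2 =>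
            (φ p.1 * star (φ q.1)) * (if p.2 = q.2 then (1 : ℂ) else 0)).mulVec v = 0)) ∨
       ((∀ i j k l : Fin 2, h (i, j) (k, l) = η i k * (φ j * star (φ l))) ∧
        (∀ v : Fin 2 × Fin 2 → ℂ, h.mulVec v = 0 ↔
          (Matrix.of fun p q : Fin 2 × Fin 2 =>
            (if p.1 = q.1 then (1 : ℂ) else 0) * (φ p.2 * star (φ q.2))).mulVec v = 0))) := by
  have hne : h ≠ 0 := by
    intro h0
    rw [h0, Matrix.rank_zero] at hrank
    exact absurd hrank (by norm_num)
  rcases dichotomy h hne hnoent with ⟨x, hxne, hA⟩ | ⟨y, hyne, hB⟩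
  · obtain ⟨i₀, hi₀⟩ : ∃ i, x i ≠ 0 := by
      by_contra hc; push_neg at hc; exact hxne (funext hc)
    obtain ⟨φ, η, h1, h2, h3, h4⟩ := main_lemma h hherm hpsd hrank x i₀ hi₀ hA
    exact ⟨φ, η, h1, h2, Or.inl ⟨h3, h4⟩⟩
  · set e := Equiv.prodComm (Fin 2) (Fin 2) with he
    set h' : Matrix (Fin 2 × Fin 2) (Fin 2 × Fin 2) ℂ := h.submatrix e e with hh'
    have hent : ∀ a b c dd : Fin 2, h' (a,b) (c,dd) = h (b,a) (dd,c) := fun _ _ _ _ => rfl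
    have hherm' : h'.IsHermitian := hherm.submatrix e
    have hpsd' : h'.PosSemidef := by
      refine .of_dotProduct_mulVec_nonneg hherm' (fun v => ?_)
      have heq : star v ⬝ᵥ h' *ᵥ v =
          star (fun p : Fin 2 × Fin 2 => v (p.2, p.1)) ⬝ᵥ
            h *ᵥ (fun p : Fin 2 × Fin 2 => v (p.2, p.1)) := by
        simp only [hh', Matrix.mulVec, dotProduct, Fintype.sum_prod_type,
          Fin.sum_univ_two, Matrix.submatrix_apply, he, Equiv.prodComm_apply, Prod.swap_prod_mk,
          Pi.star_apply]
        ring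
      rw [heq]; exact hpsd.dotProduct_mulVec_nonneg _
    have hrank' : h'.rank = 2 := by
      rw [hh', Matrix.rank_submatrix]; exact hrank
    have hcols' : ∀ q : Fin 2 × Fin 2, ∃ z : Fin 2 → ℂ, ∀ a b : Fin 2,
        h' (a,b) q = y a * z b := by
      intro q
      obtain ⟨xq, hxq⟩ := hB (q.2, q.1)
      exact ⟨xq, fun a b => by rw [show h' (a,b) q = h (b,a) (q.2,q.1) from rfl, hxq b a]; ring⟩
    obtain ⟨j₀, hj₀⟩ : ∃ j, y j ≠ 0 := by
      by_contra hc; push_neg at hc; exact hyne (funext hc)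
    obtain ⟨φ, η, h1, h2, h3, h4⟩ := main_lemma h' hherm' hpsd' hrank' y j₀ hj₀ hcols'
    refine ⟨φ, η, h1, h2, Or.inr ⟨?_, ?_⟩⟩
    · intro i j k l
      have := h3 j i l k
      rw [show h' (j,i) (l,k) = h (i,j) (k,l) from rfl] at this
      rw [this]; ring
    · intro v
      have h4v := h4 (fun p => v (p.2, p.1))
      have hswap : ∀ a b : Fin 2,
          (h'.mulVec (fun p => v (p.2, p.1))) (a,b) = (h.mulVec v) (b,a) := by
        intro a b
        simp only [hh', Matrix.mulVec, dotProduct, Fintype.sum_prod_type,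
          Fin.sum_univ_two, Matrix.submatrix_apply, he, Equiv.prodComm_apply,
          Prod.swap_prod_mk]
        ring
      have hswapM : ∀ a b : Fin 2,
          ((Matrix.of fun p q : Fin 2 × Fin 2 =>
            (φ p.1 * star (φ q.1)) * (if p.2 = q.2 then (1:ℂ) else 0)).mulVec
              (fun p => v (p.2, p.1))) (a,b)
          = ((Matrix.of fun p q : Fin 2 × Fin 2 =>
            (if p.1 = q.1 then (1:ℂ) else 0) * (φ p.2 * star (φ q.2))).mulVec v) (b,a) := by
        intro a b
        simp only [Matrix.mulVec, dotProduct, Fintype.sum_prod_type, Fin.sum_univ_two,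
          Matrix.of_apply]
        ring
      have hL : h.mulVec v = 0 ↔ h'.mulVec (fun p => v (p.2, p.1)) = 0 := by
        constructor
        · intro h0
          funext p; obtain ⟨a, b⟩ := p
          rw [hswap a b]
          rw [h0]; rfl
        · intro h0
          funext p; obtain ⟨b, a⟩ := p
          have := congrFun h0 (a, b)
          rw [hswap a b] at this
          simpa using this
      have hR : (Matrix.of fun p q : Fin 2 × Fin 2 =>
            (φ p.1 * star (φ q.1)) * (if p.2 = q.2 then (1:ℂ) else 0)).mulVec
              (fun p => v (p.2, p.1)) = 0
          ↔ (Matrix.of fun p q : Fin 2 × Fin 2 =>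
            (if p.1 = q.1 then (1:ℂ) else 0) * (φ p.2 * star (φ q.2))).mulVec v = 0 := by
        constructor
        · intro h0
          funext p; obtain ⟨b, a⟩ := p
          have := congrFun h0 (a, b)
          rw [hswapM a b] at this
          simpa using this
        · intro h0
          funext p; obtain ⟨a, b⟩ := p
          rw [hswapM a b, h0]; rfl
      rw [hL, h4v, hR]
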